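/- Optimism and pessimism of the value estimates (Lemma A.6): in the setting described in the context, assume the confidence-set conditions ‖θ̄_h − θ*_h‖_{Σ̄_h} ≤ β and ‖θ̲_h − θ*_h‖_{Σ̲_h} ≤ β hold for every h ∈ {1,…,H}. Let π = (π_h) and ν = (ν_h) be the marginal policies of the joint distributions (μ_h). Then for all h ∈ {1,…,H}, all s ∈ S, a ∈ A, b ∈ B: Q̲_h(s,a,b) − (H−h+1)ε ≤ Q_h^{π,*}(s,a,b) ≤ Q_h^{*,ν}(s,a,b) ≤ Q̄_h(s,a,b) + (H−h+1)ε, and V̲_h(s) − (H−h+2)ε ≤ V_h^{π,*}(s) ≤ V_h^{*,ν}(s) ≤ V̄_h(s) + (H−h+2)ε. -/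

import Mathlib

open BigOperators Finset Matrix

/-- Projection of `x : ℝ` onto the interval `[l, u]`. -/
noncomputable def clip (l u x : ℝ) : ℝ := max l (min x u)

/-- Weighted (semi-)norm `‖x‖_M = √(xᵀ M x)`. -/
noncomputable def wnorm {d : ℕ} (M : Matrix (Fin d) (Fin d) ℝ) (x : Fin d → ℝ) : ℝ :=
  Real.sqrt (x ⬝ᵥ M.mulVec x)

/-- Value function of a finite two-player zero-sum Markov game, defined by backward
recursion on the number `t` of remaining steps; `Vaux H r P p q t s` is the value at
step `h = H + 1 - t` in state `s`. -/
noncomputable def Vaux {S A B : Type*} [Fintype S] [Fintype A] [Fintype B]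
    (H : ℕ) (r : ℕ → S → A → B → ℝ) (P : ℕ → S → A → B → S → ℝ)
    (p : ℕ → S → A → ℝ) (q : ℕ → S → B → ℝ) : ℕ → S → ℝ
  | 0, _ => 0
  | t+1, s =>
      ∑ a, ∑ b, p (H - t) s a * q (H - t) s b *
        (r (H - t) s a b + ∑ s', P (H - t) s a b s' * Vaux H r P p q t s')

/-- `Vval H r P p q h s` = V_h^{p,q}(s). -/
noncomputable def Vval {S A B : Type*} [Fintype S] [Fintype A] [Fintype B]
    (H : ℕ) (r : ℕ → S → A → B → ℝ) (P : ℕ → S → A → B → S → ℝ)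
    (p : ℕ → S → A → ℝ) (q : ℕ → S → B → ℝ) (h : ℕ) (s : S) : ℝ :=
  Vaux H r P p q (H + 1 - h) s

/-- Q_h^{p,q}(s,a,b). -/
noncomputable def Qval {S A B : Type*} [Fintype S] [Fintype A] [Fintype B]
    (H : ℕ) (r : ℕ → S → A → B → ℝ) (P : ℕ → S → A → B → S → ℝ)
    (p : ℕ → S → A → ℝ) (q : ℕ → S → B → ℝ) (h : ℕ) (s : S) (a : A) (b : B) : ℝ :=
  r h s a b + ∑ s', P h s a b s' * Vval H r P p q (h+1) s'

/-- A Markov policy: at every step and state, a probability distribution over actions. -/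
def IsPolicy {S A : Type*} [Fintype A] (p : ℕ → S → A → ℝ) : Prop :=
  ∀ h s, (∀ a, 0 ≤ p h s a) ∧ ∑ a, p h s a = 1

/-- Rewards in `[-1,1]` and transition kernels that are probability mass functions. -/
def IsGame {S A B : Type*} [Fintype S]
    (r : ℕ → S → A → B → ℝ) (P : ℕ → S → A → B → S → ℝ) : Prop :=
  (∀ h s a b, -1 ≤ r h s a b ∧ r h s a b ≤ 1) ∧
  (∀ h s a b, (∀ s', 0 ≤ P h s a b s') ∧ ∑ s', P h s a b s' = 1)

/-- V_h^{*,q}(s). -/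
noncomputable def VmaxBR {S A B : Type*} [Fintype S] [Fintype A] [Fintype B]
    (H : ℕ) (r : ℕ → S → A → B → ℝ) (P : ℕ → S → A → B → S → ℝ)
    (q : ℕ → S → B → ℝ) (h : ℕ) (s : S) : ℝ :=
  sSup {x | ∃ p, IsPolicy p ∧ x = Vval H r P p q h s}

/-- V_h^{p,*}(s). -/
noncomputable def VminBR {S A B : Type*} [Fintype S] [Fintype A] [Fintype B]
    (H : ℕ) (r : ℕ → S → A → B → ℝ) (P : ℕ → S → A → B → S → ℝ)
    (p : ℕ → S → A → ℝ) (h : ℕ) (s : S) : ℝ :=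
  sInf {x | ∃ q, IsPolicy q ∧ x = Vval H r P p q h s}

/-- Q_h^{*,q}(s,a,b). -/
noncomputable def QmaxBR {S A B : Type*} [Fintype S] [Fintype A] [Fintype B]
    (H : ℕ) (r : ℕ → S → A → B → ℝ) (P : ℕ → S → A → B → S → ℝ)
    (q : ℕ → S → B → ℝ) (h : ℕ) (s : S) (a : A) (b : B) : ℝ :=
  sSup {x | ∃ p, IsPolicy p ∧ x = Qval H r P p q h s a b}

/-- Q_h^{p,*}(s,a,b). -/
noncomputable def QminBR {S A B : Type*} [Fintype S] [Fintype A] [Fintype B]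
    (H : ℕ) (r : ℕ → S → A → B → ℝ) (P : ℕ → S → A → B → S → ℝ)
    (p : ℕ → S → A → ℝ) (h : ℕ) (s : S) (a : A) (b : B) : ℝ :=
  sInf {x | ∃ q, IsPolicy q ∧ x = Qval H r P p q h s a b}

/-- The optimistic (`sgn = 1`) / pessimistic (`sgn = -1`) value functions of the
algorithm, defined by backward recursion on the number `t` of remaining steps:
`Vrec … t s` is `V̄`/`V̲` at step `h = H + 1 - t`, i.e. the `μ`-average of the clipped
optimistic/pessimistic action-value built from the estimates `θ` and matrices `Sm`. -/
noncomputable def Vrec {S A B : Type*} [Fintype S] [Fintype A] [Fintype B] {d : ℕ}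
    (H : ℕ) (r : ℕ → S → A → B → ℝ) (φ : S → A → B → S → Fin d → ℝ)
    (θ : ℕ → Fin d → ℝ) (Sm : ℕ → Matrix (Fin d) (Fin d) ℝ) (β : ℝ) (sgn : ℝ)
    (μ : ℕ → S → A → B → ℝ) : ℕ → S → ℝ
  | 0, _ => 0
  | t+1, s =>
      ∑ a, ∑ b, μ (H - t) s a b *
        clip (-(H : ℝ)) H (r (H - t) s a b
          + ((∑ s', Vrec H r φ θ Sm β sgn μ t s' • φ s a b s') ⬝ᵥ θ (H - t))
          + sgn * β * wnorm (Sm (H - t))⁻¹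
              (∑ s', Vrec H r φ θ Sm β sgn μ t s' • φ s a b s'))

/-- The optimistic (`sgn = 1`) / pessimistic (`sgn = -1`) action-value estimate
`Q̄_h`/`Q̲_h` of the algorithm (it uses `V̄_{h+1}` = `Vrec … (H - h)`). -/
noncomputable def Qrec {S A B : Type*} [Fintype S] [Fintype A] [Fintype B] {d : ℕ}
    (H : ℕ) (r : ℕ → S → A → B → ℝ) (φ : S → A → B → S → Fin d → ℝ)
    (θ : ℕ → Fin d → ℝ) (Sm : ℕ → Matrix (Fin d) (Fin d) ℝ) (β : ℝ) (sgn : ℝ)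
    (μ : ℕ → S → A → B → ℝ) (h : ℕ) (s : S) (a : A) (b : B) : ℝ :=
  clip (-(H : ℝ)) H (r h s a b
    + ((∑ s', Vrec H r φ θ Sm β sgn μ (H - h) s' • φ s a b s') ⬝ᵥ θ h)
    + sgn * β * wnorm (Sm h)⁻¹
        (∑ s', Vrec H r φ θ Sm β sgn μ (H - h) s' • φ s a b s'))

/-- `V̄_h`/`V̲_h` as a function of the step index `h`. -/
noncomputable def VrecAt {S A B : Type*} [Fintype S] [Fintype A] [Fintype B] {d : ℕ}
    (H : ℕ) (r : ℕ → S → A → B → ℝ) (φ : S → A → B → S → Fin d → ℝ)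
    (θ : ℕ → Fin d → ℝ) (Sm : ℕ → Matrix (Fin d) (Fin d) ℝ) (β : ℝ) (sgn : ℝ)
    (μ : ℕ → S → A → B → ℝ) (h : ℕ) (s : S) : ℝ :=
  Vrec H r φ θ Sm β sgn μ (H + 1 - h) s

section helpers
set_option linter.unusedSectionVars false

lemma clip_le_max (l u x : ℝ) : clip l u x ≤ max l x :=
  max_le_max le_rfl (min_le_left _ _)

lemma min_le_clip (l u x : ℝ) : min x u ≤ clip l u x := le_max_right _ _

variable {S A B : Type*} [Fintype S] [Fintype A] [Fintype B]

lemma isPolicy_unif [Nonempty A] :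
    IsPolicy (fun (_ : ℕ) (_ : S) (_ : A) => (Fintype.card A : ℝ)⁻¹) := by
  intro h s
  constructor
  · intro a; positivity
  · rw [Finset.sum_const]
    simp [Finset.card_univ, Fintype.card_ne_zero]

lemma vaux_abs_le (H : ℕ) (r : ℕ → S → A → B → ℝ) (P : ℕ → S → A → B → S → ℝ)
    (p : ℕ → S → A → ℝ) (q : ℕ → S → B → ℝ)
    (hG : IsGame r P) (hp : IsPolicy p) (hq : IsPolicy q) :
    ∀ t s, |Vaux H r P p q t s| ≤ t := by
  intro t
  induction t with
  | zero => intro s; simp [Vaux]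
  | succ t ih =>
    intro s
    show |∑ a, ∑ b, _| ≤ _
    have hbd : ∀ a b, |r (H - t) s a b + ∑ s', P (H - t) s a b s' * Vaux H r P p q t s'|
        ≤ (t : ℝ) + 1 := by
      intro a b
      have h1 : |r (H - t) s a b| ≤ 1 := by
        have := (hG.1 (H - t) s a b); rw [abs_le]; exact ⟨this.1, this.2⟩
      have h2 : |∑ s', P (H - t) s a b s' * Vaux H r P p q t s'| ≤ (t : ℝ) := by
        calc |∑ s', P (H - t) s a b s' * Vaux H r P p q t s'|
            ≤ ∑ s', |P (H - t) s a b s' * Vaux H r P p q t s'| :=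
              Finset.abs_sum_le_sum_abs _ _
          _ ≤ ∑ s', P (H - t) s a b s' * (t : ℝ) := by
              apply Finset.sum_le_sum
              intro s' _
              rw [abs_mul, abs_of_nonneg ((hG.2 (H - t) s a b).1 s')]
              exact mul_le_mul_of_nonneg_left (ih s') ((hG.2 (H - t) s a b).1 s')
          _ = (t : ℝ) := by rw [← Finset.sum_mul, (hG.2 (H - t) s a b).2, one_mul]
      calc |r (H - t) s a b + ∑ s', P (H - t) s a b s' * Vaux H r P p q t s'|
          ≤ |r (H - t) s a b| + |∑ s', P (H - t) s a b s' * Vaux H r P p q t s'| :=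
            abs_add_le _ _
        _ ≤ (t : ℝ) + 1 := by linarith
    calc |∑ a, ∑ b, p (H - t) s a * q (H - t) s b *
          (r (H - t) s a b + ∑ s', P (H - t) s a b s' * Vaux H r P p q t s')|
        ≤ ∑ a, ∑ b, |p (H - t) s a * q (H - t) s b *
          (r (H - t) s a b + ∑ s', P (H - t) s a b s' * Vaux H r P p q t s')| := by
          refine le_trans (Finset.abs_sum_le_sum_abs _ _) ?_
          exact Finset.sum_le_sum fun a _ => Finset.abs_sum_le_sum_abs _ _
      _ ≤ ∑ a, ∑ b, p (H - t) s a * q (H - t) s b * ((t : ℝ) + 1) := by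
          refine Finset.sum_le_sum fun a _ => Finset.sum_le_sum fun b _ => ?_
          rw [abs_mul, abs_mul, abs_of_nonneg ((hp (H - t) s).1 a),
            abs_of_nonneg ((hq (H - t) s).1 b), mul_assoc]
          have hnn : 0 ≤ p (H - t) s a * q (H - t) s b :=
            mul_nonneg ((hp (H - t) s).1 a) ((hq (H - t) s).1 b)
          rw [← mul_assoc]
          exact mul_le_mul_of_nonneg_left (hbd a b) hnn
      _ = (t : ℝ) + 1 := by
          simp_rw [mul_assoc, ← Finset.mul_sum, ← Finset.sum_mul, (hq _ s).2, (hp _ s).2]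
          ring
      _ = ((t + 1 : ℕ) : ℝ) := by push_cast; ring

lemma vval_abs_le (H : ℕ) (r : ℕ → S → A → B → ℝ) (P : ℕ → S → A → B → S → ℝ)
    (p : ℕ → S → A → ℝ) (q : ℕ → S → B → ℝ)
    (hG : IsGame r P) (hp : IsPolicy p) (hq : IsPolicy q) (h : ℕ) (s : S) :
    |Vval H r P p q h s| ≤ ((H + 1 - h : ℕ) : ℝ) :=
  vaux_abs_le H r P p q hG hp hq _ s

lemma qval_abs_le (H : ℕ) (r : ℕ → S → A → B → ℝ) (P : ℕ → S → A → B → S → ℝ)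
    (p : ℕ → S → A → ℝ) (q : ℕ → S → B → ℝ)
    (hG : IsGame r P) (hp : IsPolicy p) (hq : IsPolicy q) (h : ℕ) (hh : 1 ≤ h) (hH : h ≤ H)
    (s : S) (a : A) (b : B) :
    |Qval H r P p q h s a b| ≤ (H : ℝ) := by
  have h1 : |r h s a b| ≤ 1 := by
    have := (hG.1 h s a b); rw [abs_le]; exact ⟨this.1, this.2⟩
  have h2 : |∑ s', P h s a b s' * Vval H r P p q (h+1) s'| ≤ ((H - h : ℕ) : ℝ) := by
    calc |∑ s', P h s a b s' * Vval H r P p q (h+1) s'|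
        ≤ ∑ s', |P h s a b s' * Vval H r P p q (h+1) s'| := Finset.abs_sum_le_sum_abs _ _
      _ ≤ ∑ s', P h s a b s' * ((H - h : ℕ) : ℝ) := by
          refine Finset.sum_le_sum fun s' _ => ?_
          rw [abs_mul, abs_of_nonneg ((hG.2 h s a b).1 s')]
          refine mul_le_mul_of_nonneg_left ?_ ((hG.2 h s a b).1 s')
          have := vval_abs_le H r P p q hG hp hq (h+1) s'
          rwa [show H + 1 - (h+1) = H - h from by omega] at this
      _ = ((H - h : ℕ) : ℝ) := by rw [← Finset.sum_mul, (hG.2 h s a b).2, one_mul]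
  have hcast : ((H - h : ℕ) : ℝ) = (H : ℝ) - h := by
    have := Nat.cast_sub hH (R := ℝ); exact this
  rw [hcast] at h2
  have hh' : (1 : ℝ) ≤ (h : ℝ) := by exact_mod_cast hh
  rw [Qval, abs_le] at *
  constructor <;> linarith [h1.1, h1.2, h2.1, h2.2]

lemma vval_eq (H : ℕ) (r : ℕ → S → A → B → ℝ) (P : ℕ → S → A → B → S → ℝ)
    (p : ℕ → S → A → ℝ) (q : ℕ → S → B → ℝ) (h : ℕ) (hh : 1 ≤ h) (hH : h ≤ H) (s : S) :
    Vval H r P p q h s = ∑ a, ∑ b, p h s a * q h s b * Qval H r P p q h s a b := by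
  have e1 : H + 1 - h = (H - h) + 1 := by omega
  have e2 : H - (H - h) = h := by omega
  have e3 : H + 1 - (h + 1) = H - h := by omega
  rw [Vval, e1]
  show (∑ a, ∑ b, _) = _
  simp only [e2, Qval, Vval, e3]

lemma vrec_eq {d : ℕ} (H : ℕ) (r : ℕ → S → A → B → ℝ) (φ : S → A → B → S → Fin d → ℝ)
    (θ : ℕ → Fin d → ℝ) (Sm : ℕ → Matrix (Fin d) (Fin d) ℝ) (β sgn : ℝ)
    (μ : ℕ → S → A → B → ℝ) (h : ℕ) (hh : 1 ≤ h) (hH : h ≤ H) (s : S) :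
    Vrec H r φ θ Sm β sgn μ ((H - h) + 1) s
      = ∑ a, ∑ b, μ h s a b * Qrec H r φ θ Sm β sgn μ h s a b := by
  have e2 : H - (H - h) = h := by omega
  show (∑ a, ∑ b, _) = _
  simp only [e2, Qrec]

end helpers
section helpers2
set_option linter.unusedSectionVars false
set_option maxHeartbeats 1000000

lemma psd_nonneg {d : ℕ} {M : Matrix (Fin d) (Fin d) ℝ} (hM : M.PosSemidef) (x : Fin d → ℝ) :
    0 ≤ x ⬝ᵥ M.mulVec x := by simpa using hM.dotProduct_mulVec_nonneg x

lemma psd_symm {d : ℕ} {M : Matrix (Fin d) (Fin d) ℝ} (hM : M.IsHermitian)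
    (x y : Fin d → ℝ) : x ⬝ᵥ M.mulVec y = y ⬝ᵥ M.mulVec x := by
  rw [dotProduct_mulVec, ← mulVec_transpose]
  have : Mᵀ = M := by rw [← conjTranspose_eq_transpose_of_trivial]; exact hM
  rw [this, dotProduct_comm]

lemma cs_sq {d : ℕ} {M : Matrix (Fin d) (Fin d) ℝ} (hM : M.PosSemidef)
    (x y : Fin d → ℝ) :
    (x ⬝ᵥ M.mulVec y)^2 ≤ (x ⬝ᵥ M.mulVec x) * (y ⬝ᵥ M.mulVec y) := by
  have key : ∀ t : ℝ, 0 ≤ (y ⬝ᵥ M.mulVec y) * (t*t) + (2 * (x ⬝ᵥ M.mulVec y)) * t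
      + (x ⬝ᵥ M.mulVec x) := by
    intro t
    have h0 := psd_nonneg hM (x + t • y)
    have hsym := psd_symm hM.1 x y
    simp only [add_dotProduct, mulVec_add, dotProduct_add, mulVec_smul, smul_dotProduct,
      dotProduct_smul, smul_eq_mul] at h0
    rw [← hsym] at h0
    nlinarith [h0]
  have hd := discrim_le_zero key
  rw [discrim] at hd
  nlinarith [hd]

lemma wnorm_nonneg {d : ℕ} (M : Matrix (Fin d) (Fin d) ℝ) (x : Fin d → ℝ) : 0 ≤ wnorm M x :=
  Real.sqrt_nonneg _

lemma abs_dot_le {d : ℕ} {M : Matrix (Fin d) (Fin d) ℝ} (hM : M.PosDef)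
    (x w : Fin d → ℝ) : |x ⬝ᵥ w| ≤ wnorm M⁻¹ x * wnorm M w := by
  have hMinv : (M⁻¹).PosDef := hM.inv
  have hdet : IsUnit M.det := isUnit_iff_ne_zero.2 hM.det_pos.ne'
  have hw : (M⁻¹).mulVec (M.mulVec w) = w := by
    rw [mulVec_mulVec, Matrix.nonsing_inv_mul _ hdet, one_mulVec]
  have h1 : x ⬝ᵥ w = x ⬝ᵥ (M⁻¹).mulVec (M.mulVec w) := by rw [hw]
  have h2 := cs_sq hMinv.posSemidef x (M.mulVec w)
  have h3 : (M.mulVec w) ⬝ᵥ (M⁻¹).mulVec (M.mulVec w) = w ⬝ᵥ M.mulVec w := by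
    rw [hw, dotProduct_comm]
  rw [h3] at h2
  rw [h1, wnorm, wnorm, ← Real.sqrt_sq_eq_abs,
    ← Real.sqrt_mul (psd_nonneg hMinv.posSemidef x)]
  exact Real.sqrt_le_sqrt h2

lemma wnorm_neg {d : ℕ} (M : Matrix (Fin d) (Fin d) ℝ) (x y : Fin d → ℝ) :
    wnorm M (x - y) = wnorm M (y - x) := by
  rw [wnorm, wnorm, show x - y = -(y-x) by ring, mulVec_neg, neg_dotProduct, dotProduct_neg,
    neg_neg]

lemma cs_bound {d : ℕ} {M : Matrix (Fin d) (Fin d) ℝ} (hM : M.PosDef) {β : ℝ}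
    (x θ θ' : Fin d → ℝ) (hconf : wnorm M (θ' - θ) ≤ β) :
    |x ⬝ᵥ θ - x ⬝ᵥ θ'| ≤ β * wnorm M⁻¹ x := by
  rw [← dotProduct_sub]
  calc |x ⬝ᵥ (θ - θ')| ≤ wnorm M⁻¹ x * wnorm M (θ - θ') := abs_dot_le hM x _
    _ ≤ wnorm M⁻¹ x * β := by
        rw [wnorm_neg M θ θ']
        exact mul_le_mul_of_nonneg_left hconf (wnorm_nonneg _ _)
    _ = β * wnorm M⁻¹ x := mul_comm _ _

variable {S A B : Type*} [Fintype S] [Fintype A] [Fintype B]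

lemma sum_smul_dot {d : ℕ} (f : S → ℝ) (g : S → Fin d → ℝ) (θ : Fin d → ℝ) :
    (∑ s', f s' • g s') ⬝ᵥ θ = ∑ s', f s' * (g s' ⬝ᵥ θ) := by
  simp only [dotProduct, Finset.sum_apply, Pi.smul_apply, smul_eq_mul, Finset.sum_mul,
    Finset.mul_sum]
  rw [Finset.sum_comm]
  exact Finset.sum_congr rfl fun s' _ => Finset.sum_congr rfl fun i _ => by ring

-- nonempty / bounded sets
variable [Nonempty A] [Nonempty B]

lemma setV_nonempty (H : ℕ) (r : ℕ → S → A → B → ℝ) (P : ℕ → S → A → B → S → ℝ)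
    (q : ℕ → S → B → ℝ) (h : ℕ) (s : S) :
    {x | ∃ p, IsPolicy p ∧ x = Vval H r P p q h s}.Nonempty :=
  ⟨_, _, isPolicy_unif, rfl⟩

lemma setV_bddAbove (H : ℕ) (r : ℕ → S → A → B → ℝ) (P : ℕ → S → A → B → S → ℝ)
    (hG : IsGame r P) (q : ℕ → S → B → ℝ) (hq : IsPolicy q) (h : ℕ) (s : S) :
    BddAbove {x | ∃ p, IsPolicy p ∧ x = Vval H r P p q h s} :=
  ⟨((H + 1 - h : ℕ) : ℝ), by
    rintro x ⟨p, hp, rfl⟩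
    exact (abs_le.1 (vval_abs_le H r P p q hG hp hq h s)).2⟩

lemma setV_bddBelow (H : ℕ) (r : ℕ → S → A → B → ℝ) (P : ℕ → S → A → B → S → ℝ)
    (hG : IsGame r P) (q : ℕ → S → B → ℝ) (hq : IsPolicy q) (h : ℕ) (s : S) :
    BddBelow {x | ∃ p, IsPolicy p ∧ x = Vval H r P p q h s} :=
  ⟨-((H + 1 - h : ℕ) : ℝ), by
    rintro x ⟨p, hp, rfl⟩
    exact (abs_le.1 (vval_abs_le H r P p q hG hp hq h s)).1⟩

lemma setV'_nonempty (H : ℕ) (r : ℕ → S → A → B → ℝ) (P : ℕ → S → A → B → S → ℝ)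
    (p : ℕ → S → A → ℝ) (h : ℕ) (s : S) :
    {x | ∃ q, IsPolicy q ∧ x = Vval H r P p q h s}.Nonempty :=
  ⟨_, _, isPolicy_unif, rfl⟩

lemma setV'_bddAbove (H : ℕ) (r : ℕ → S → A → B → ℝ) (P : ℕ → S → A → B → S → ℝ)
    (hG : IsGame r P) (p : ℕ → S → A → ℝ) (hp : IsPolicy p) (h : ℕ) (s : S) :
    BddAbove {x | ∃ q, IsPolicy q ∧ x = Vval H r P p q h s} :=
  ⟨((H + 1 - h : ℕ) : ℝ), by
    rintro x ⟨q, hq, rfl⟩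
    exact (abs_le.1 (vval_abs_le H r P p q hG hp hq h s)).2⟩

lemma setV'_bddBelow (H : ℕ) (r : ℕ → S → A → B → ℝ) (P : ℕ → S → A → B → S → ℝ)
    (hG : IsGame r P) (p : ℕ → S → A → ℝ) (hp : IsPolicy p) (h : ℕ) (s : S) :
    BddBelow {x | ∃ q, IsPolicy q ∧ x = Vval H r P p q h s} :=
  ⟨-((H + 1 - h : ℕ) : ℝ), by
    rintro x ⟨q, hq, rfl⟩
    exact (abs_le.1 (vval_abs_le H r P p q hG hp hq h s)).1⟩

lemma setQ_nonempty (H : ℕ) (r : ℕ → S → A → B → ℝ) (P : ℕ → S → A → B → S → ℝ)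
    (q : ℕ → S → B → ℝ) (h : ℕ) (s : S) (a : A) (b : B) :
    {x | ∃ p, IsPolicy p ∧ x = Qval H r P p q h s a b}.Nonempty :=
  ⟨_, _, isPolicy_unif, rfl⟩

lemma setQ_bddAbove (H : ℕ) (r : ℕ → S → A → B → ℝ) (P : ℕ → S → A → B → S → ℝ)
    (hG : IsGame r P) (q : ℕ → S → B → ℝ) (hq : IsPolicy q) (h : ℕ) (h1 : 1 ≤ h) (hH : h ≤ H)
    (s : S) (a : A) (b : B) :
    BddAbove {x | ∃ p, IsPolicy p ∧ x = Qval H r P p q h s a b} :=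
  ⟨(H : ℝ), by
    rintro x ⟨p, hp, rfl⟩
    exact (abs_le.1 (qval_abs_le H r P p q hG hp hq h h1 hH s a b)).2⟩

lemma setQ_bddBelow (H : ℕ) (r : ℕ → S → A → B → ℝ) (P : ℕ → S → A → B → S → ℝ)
    (hG : IsGame r P) (q : ℕ → S → B → ℝ) (hq : IsPolicy q) (h : ℕ) (h1 : 1 ≤ h) (hH : h ≤ H)
    (s : S) (a : A) (b : B) :
    BddBelow {x | ∃ p, IsPolicy p ∧ x = Qval H r P p q h s a b} :=
  ⟨-(H : ℝ), by
    rintro x ⟨p, hp, rfl⟩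
    exact (abs_le.1 (qval_abs_le H r P p q hG hp hq h h1 hH s a b)).1⟩

lemma setQ'_nonempty (H : ℕ) (r : ℕ → S → A → B → ℝ) (P : ℕ → S → A → B → S → ℝ)
    (p : ℕ → S → A → ℝ) (h : ℕ) (s : S) (a : A) (b : B) :
    {x | ∃ q, IsPolicy q ∧ x = Qval H r P p q h s a b}.Nonempty :=
  ⟨_, _, isPolicy_unif, rfl⟩

lemma setQ'_bddAbove (H : ℕ) (r : ℕ → S → A → B → ℝ) (P : ℕ → S → A → B → S → ℝ)
    (hG : IsGame r P) (p : ℕ → S → A → ℝ) (hp : IsPolicy p) (h : ℕ) (h1 : 1 ≤ h) (hH : h ≤ H)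
    (s : S) (a : A) (b : B) :
    BddAbove {x | ∃ q, IsPolicy q ∧ x = Qval H r P p q h s a b} :=
  ⟨(H : ℝ), by
    rintro x ⟨q, hq, rfl⟩
    exact (abs_le.1 (qval_abs_le H r P p q hG hp hq h h1 hH s a b)).2⟩

lemma setQ'_bddBelow (H : ℕ) (r : ℕ → S → A → B → ℝ) (P : ℕ → S → A → B → S → ℝ)
    (hG : IsGame r P) (p : ℕ → S → A → ℝ) (hp : IsPolicy p) (h : ℕ) (h1 : 1 ≤ h) (hH : h ≤ H)
    (s : S) (a : A) (b : B) :
    BddBelow {x | ∃ q, IsPolicy q ∧ x = Qval H r P p q h s a b} :=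
  ⟨-(H : ℝ), by
    rintro x ⟨q, hq, rfl⟩
    exact (abs_le.1 (qval_abs_le H r P p q hG hp hq h h1 hH s a b)).1⟩

end helpers2
section step
set_option linter.unusedSectionVars false
set_option maxHeartbeats 1000000

variable {S A B : Type*} [Fintype S] [Fintype A] [Fintype B] [Nonempty A] [Nonempty B] {d : ℕ}

lemma Qstep (H : ℕ) (r : ℕ → S → A → B → ℝ) (P : ℕ → S → A → B → S → ℝ) (hG : IsGame r P)
    (φ : S → A → B → S → Fin d → ℝ) (θs : ℕ → Fin d → ℝ)
    (hmix : ∀ h s a b s', P h s a b s' = φ s a b s' ⬝ᵥ θs h)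
    (ε β : ℝ) (hε : 0 ≤ ε) (hβ : 0 < β)
    (θb θl : ℕ → Fin d → ℝ) (Sb Sl : ℕ → Matrix (Fin d) (Fin d) ℝ)
    (hSb : ∀ h, (Sb h).PosDef) (hSl : ∀ h, (Sl h).PosDef)
    (μ : ℕ → S → A → B → ℝ) (π : ℕ → S → A → ℝ) (ν : ℕ → S → B → ℝ)
    (hπ : IsPolicy π) (hν : IsPolicy ν)
    (h : ℕ) (h1 : 1 ≤ h) (hH : h ≤ H)
    (hconfb : wnorm (Sb h) (θb h - θs h) ≤ β) (hconfl : wnorm (Sl h) (θl h - θs h) ≤ β)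
    (c : ℝ) (hc : 0 ≤ c)
    (hVl : ∀ s, Vrec H r φ θl Sl β (-1) μ (H - h) s - c*ε ≤ VminBR H r P π (h+1) s)
    (hVb : ∀ s, VmaxBR H r P ν (h+1) s ≤ Vrec H r φ θb Sb β 1 μ (H - h) s + c*ε) :
    ∀ s a b, Qrec H r φ θl Sl β (-1) μ h s a b - c*ε ≤ QminBR H r P π h s a b ∧
      QminBR H r P π h s a b ≤ QmaxBR H r P ν h s a b ∧
      QmaxBR H r P ν h s a b ≤ Qrec H r φ θb Sb β 1 μ h s a b + c*ε := by
  intro s a b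
  have hεc : 0 ≤ c * ε := mul_nonneg hc hε
  have hP := hG.2 h s a b
  -- transition dot identity
  have fact1 : ∀ (V : S → ℝ) (θ : ℕ → Fin d → ℝ),
      (∑ s', V s' • φ s a b s') ⬝ᵥ θ h = ∑ s', (φ s a b s' ⬝ᵥ θ h) * V s' := by
    intro V θ
    rw [sum_smul_dot]
    exact Finset.sum_congr rfl fun s' _ => mul_comm _ _
  refine ⟨?_, ?_, ?_⟩
  · -- pessimistic lower bound
    set Vl' : S → ℝ := fun s' => Vrec H r φ θl Sl β (-1) μ (H - h) s' with hVl'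
    set x : Fin d → ℝ := ∑ s', Vl' s' • φ s a b s' with hx
    refine le_csInf (setQ'_nonempty H r P π h s a b) ?_
    rintro y ⟨q, hq, rfl⟩
    -- Qval π q ≥ E' - cε and ≥ -H
    have step1 : ∀ s', Vl' s' - c*ε ≤ Vval H r P π q (h+1) s' := by
      intro s'
      refine le_trans (hVl s') ?_
      exact csInf_le (setV'_bddBelow H r P hG π hπ (h+1) s') ⟨q, hq, rfl⟩
    have step2 : (∑ s', P h s a b s' * Vl' s') - c*ε
        ≤ ∑ s', P h s a b s' * Vval H r P π q (h+1) s' := by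
      have : ∑ s', P h s a b s' * (Vl' s' - c*ε)
          ≤ ∑ s', P h s a b s' * Vval H r P π q (h+1) s' :=
        Finset.sum_le_sum fun s' _ => mul_le_mul_of_nonneg_left (step1 s') (hP.1 s')
      calc (∑ s', P h s a b s' * Vl' s') - c*ε
          = ∑ s', P h s a b s' * (Vl' s' - c*ε) := by
            simp only [mul_sub, Finset.sum_sub_distrib, ← Finset.sum_mul, hP.2, one_mul]
        _ ≤ _ := this
    have step3 : x ⬝ᵥ θl h - β * wnorm (Sl h)⁻¹ x ≤ ∑ s', P h s a b s' * Vl' s' := by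
      have hd : x ⬝ᵥ θs h = ∑ s', P h s a b s' * Vl' s' := by
        rw [fact1 Vl' θs]
        exact Finset.sum_congr rfl fun s' _ => by rw [hmix]
      have hcs := abs_dot_le (hSl h) x (θl h - θs h)
      rw [dotProduct_sub, abs_le] at hcs
      have hmul := mul_le_mul_of_nonneg_left hconfl (wnorm_nonneg (Sl h)⁻¹ x)
      nlinarith [hcs.1, hcs.2, hmul, hd.le, hd.ge]
    have step4 : -(H:ℝ) ≤ Qval H r P π q h s a b :=
      (abs_le.1 (qval_abs_le H r P π q hG hπ hq h h1 hH s a b)).1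
    have hE : Qrec H r φ θl Sl β (-1) μ h s a b
        ≤ max (-(H:ℝ)) (r h s a b + (x ⬝ᵥ θl h) + (-1) * β * wnorm (Sl h)⁻¹ x) :=
      clip_le_max _ _ _
    have : r h s a b + (x ⬝ᵥ θl h) + (-1) * β * wnorm (Sl h)⁻¹ x
        ≤ Qval H r P π q h s a b + c*ε := by
      rw [Qval]; nlinarith [step2, step3]
    have hmax : max (-(H:ℝ)) (r h s a b + (x ⬝ᵥ θl h) + (-1) * β * wnorm (Sl h)⁻¹ x)
        ≤ Qval H r P π q h s a b + c*ε := max_le (by linarith) this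
    linarith [le_trans hE hmax]
  · -- middle
    calc QminBR H r P π h s a b ≤ Qval H r P π ν h s a b :=
          csInf_le (setQ'_bddBelow H r P hG π hπ h h1 hH s a b) ⟨ν, hν, rfl⟩
      _ ≤ QmaxBR H r P ν h s a b :=
          le_csSup (setQ_bddAbove H r P hG ν hν h h1 hH s a b) ⟨π, hπ, rfl⟩
  · -- optimistic upper bound
    set Vb' : S → ℝ := fun s' => Vrec H r φ θb Sb β 1 μ (H - h) s' with hVb'
    set x : Fin d → ℝ := ∑ s', Vb' s' • φ s a b s' with hx
    refine csSup_le (setQ_nonempty H r P ν h s a b) ?_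
    rintro y ⟨p, hp, rfl⟩
    have step1 : ∀ s', Vval H r P p ν (h+1) s' ≤ Vb' s' + c*ε := by
      intro s'
      refine le_trans ?_ (hVb s')
      exact le_csSup (setV_bddAbove H r P hG ν hν (h+1) s') ⟨p, hp, rfl⟩
    have step2 : ∑ s', P h s a b s' * Vval H r P p ν (h+1) s'
        ≤ (∑ s', P h s a b s' * Vb' s') + c*ε := by
      have : ∑ s', P h s a b s' * Vval H r P p ν (h+1) s'
          ≤ ∑ s', P h s a b s' * (Vb' s' + c*ε) :=
        Finset.sum_le_sum fun s' _ => mul_le_mul_of_nonneg_left (step1 s') (hP.1 s')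
      calc ∑ s', P h s a b s' * Vval H r P p ν (h+1) s' ≤ _ := this
        _ = (∑ s', P h s a b s' * Vb' s') + c*ε := by
            simp only [mul_add, Finset.sum_add_distrib, ← Finset.sum_mul, hP.2, one_mul]
    have step3 : ∑ s', P h s a b s' * Vb' s' ≤ x ⬝ᵥ θb h + β * wnorm (Sb h)⁻¹ x := by
      have hd : x ⬝ᵥ θs h = ∑ s', P h s a b s' * Vb' s' := by
        rw [fact1 Vb' θs]
        exact Finset.sum_congr rfl fun s' _ => by rw [hmix]
      have hcs := abs_dot_le (hSb h) x (θb h - θs h)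
      rw [dotProduct_sub, abs_le] at hcs
      have hmul := mul_le_mul_of_nonneg_left hconfb (wnorm_nonneg (Sb h)⁻¹ x)
      nlinarith [hcs.1, hcs.2, hmul, hd.le, hd.ge]
    have step4 : Qval H r P p ν h s a b ≤ (H:ℝ) :=
      (abs_le.1 (qval_abs_le H r P p ν hG hp hν h h1 hH s a b)).2
    have hE : min (r h s a b + (x ⬝ᵥ θb h) + 1 * β * wnorm (Sb h)⁻¹ x) (H:ℝ)
        ≤ Qrec H r φ θb Sb β 1 μ h s a b := min_le_clip _ _ _
    have : Qval H r P p ν h s a b - c*ε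
        ≤ r h s a b + (x ⬝ᵥ θb h) + 1 * β * wnorm (Sb h)⁻¹ x := by
      rw [Qval]; nlinarith [step2, step3]
    have hmin : Qval H r P p ν h s a b - c*ε
        ≤ min (r h s a b + (x ⬝ᵥ θb h) + 1 * β * wnorm (Sb h)⁻¹ x) (H:ℝ) :=
      le_min this (by linarith)
    linarith [le_trans hmin hE]

end step
section vstep
set_option linter.unusedSectionVars false
set_option linter.unusedVariables false
set_option maxHeartbeats 1000000

variable {S A B : Type*} [Fintype S] [Fintype A] [Fintype B] [Nonempty A] [Nonempty B] {d : ℕ}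

lemma Vstep (H : ℕ) (r : ℕ → S → A → B → ℝ) (P : ℕ → S → A → B → S → ℝ) (hG : IsGame r P)
    (φ : S → A → B → S → Fin d → ℝ)
    (ε β : ℝ) (hε : 0 ≤ ε)
    (θb θl : ℕ → Fin d → ℝ) (Sb Sl : ℕ → Matrix (Fin d) (Fin d) ℝ)
    (μ : ℕ → S → A → B → ℝ) (π : ℕ → S → A → ℝ) (ν : ℕ → S → B → ℝ)
    (hπ : IsPolicy π) (hν : IsPolicy ν)
    (h : ℕ) (h1 : 1 ≤ h) (hH : h ≤ H)
    (c : ℝ) (hc : 0 ≤ c)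
    (hQ : ∀ s a b, Qrec H r φ θl Sl β (-1) μ h s a b - c*ε ≤ QminBR H r P π h s a b ∧
      QminBR H r P π h s a b ≤ QmaxBR H r P ν h s a b ∧
      QmaxBR H r P ν h s a b ≤ Qrec H r φ θb Sb β 1 μ h s a b + c*ε)
    (hCCEa : ∀ (s : S) (a' : A), ∑ b, ν h s b * Qrec H r φ θb Sb β 1 μ h s a' b
        ≤ (∑ a, ∑ b, μ h s a b * Qrec H r φ θb Sb β 1 μ h s a b) + ε)
    (hCCEb : ∀ (s : S) (b' : B),
        (∑ a, ∑ b, μ h s a b * Qrec H r φ θl Sl β (-1) μ h s a b) - ε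
        ≤ ∑ a, π h s a * Qrec H r φ θl Sl β (-1) μ h s a b') :
    ∀ s, (∑ a, ∑ b, μ h s a b * Qrec H r φ θl Sl β (-1) μ h s a b) - (c+1)*ε
        ≤ VminBR H r P π h s ∧
      VminBR H r P π h s ≤ VmaxBR H r P ν h s ∧
      VmaxBR H r P ν h s
        ≤ (∑ a, ∑ b, μ h s a b * Qrec H r φ θb Sb β 1 μ h s a b) + (c+1)*ε := by
  intro s
  refine ⟨?_, ?_, ?_⟩
  · refine le_csInf (setV'_nonempty H r P π h s) ?_
    rintro x ⟨q, hq, rfl⟩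
    rw [vval_eq H r P π q h h1 hH s]
    have key : ∀ (a : A) (b : B), Qrec H r φ θl Sl β (-1) μ h s a b - c*ε
        ≤ Qval H r P π q h s a b := fun a b =>
      le_trans (hQ s a b).1 (csInf_le (setQ'_bddBelow H r P hG π hπ h h1 hH s a b) ⟨q, hq, rfl⟩)
    have inner : ∀ b : B, (∑ a, ∑ b', μ h s a b' * Qrec H r φ θl Sl β (-1) μ h s a b')
        - ε - c*ε ≤ ∑ a, π h s a * Qval H r P π q h s a b := by
      intro b
      have t1 : ∑ a, π h s a * (Qrec H r φ θl Sl β (-1) μ h s a b - c*ε)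
          ≤ ∑ a, π h s a * Qval H r P π q h s a b :=
        Finset.sum_le_sum fun a _ => mul_le_mul_of_nonneg_left (key a b) ((hπ h s).1 a)
      have t2 : ∑ a, π h s a * (Qrec H r φ θl Sl β (-1) μ h s a b - c*ε)
          = (∑ a, π h s a * Qrec H r φ θl Sl β (-1) μ h s a b) - c*ε := by
        simp only [mul_sub, Finset.sum_sub_distrib, ← Finset.sum_mul, (hπ h s).2, one_mul]
      have t3 := hCCEb s b
      linarith
    have rear : ∑ a, ∑ b, π h s a * q h s b * Qval H r P π q h s a b
        = ∑ b, q h s b * ∑ a, π h s a * Qval H r P π q h s a b := by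
      rw [Finset.sum_comm]
      refine Finset.sum_congr rfl fun b _ => ?_
      rw [Finset.mul_sum]
      exact Finset.sum_congr rfl fun a _ => by ring
    rw [rear]
    have t4 : ∑ b, q h s b * ((∑ a, ∑ b', μ h s a b' * Qrec H r φ θl Sl β (-1) μ h s a b')
        - ε - c*ε) ≤ ∑ b, q h s b * ∑ a, π h s a * Qval H r P π q h s a b :=
      Finset.sum_le_sum fun b _ => mul_le_mul_of_nonneg_left (inner b) ((hq h s).1 b)
    have t5 : ∑ b, q h s b * ((∑ a, ∑ b', μ h s a b' * Qrec H r φ θl Sl β (-1) μ h s a b')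
        - ε - c*ε) = (∑ a, ∑ b', μ h s a b' * Qrec H r φ θl Sl β (-1) μ h s a b') - ε - c*ε := by
      rw [← Finset.sum_mul, (hq h s).2, one_mul]
    rw [t5] at t4
    linarith
  · calc VminBR H r P π h s ≤ Vval H r P π ν h s :=
          csInf_le (setV'_bddBelow H r P hG π hπ h s) ⟨ν, hν, rfl⟩
      _ ≤ VmaxBR H r P ν h s :=
          le_csSup (setV_bddAbove H r P hG ν hν h s) ⟨π, hπ, rfl⟩
  · refine csSup_le (setV_nonempty H r P ν h s) ?_
    rintro x ⟨p, hp, rfl⟩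
    rw [vval_eq H r P p ν h h1 hH s]
    have key : ∀ (a : A) (b : B), Qval H r P p ν h s a b
        ≤ Qrec H r φ θb Sb β 1 μ h s a b + c*ε := fun a b =>
      le_trans (le_csSup (setQ_bddAbove H r P hG ν hν h h1 hH s a b) ⟨p, hp, rfl⟩) (hQ s a b).2.2
    have inner : ∀ a : A, ∑ b, ν h s b * Qval H r P p ν h s a b
        ≤ (∑ a', ∑ b, μ h s a' b * Qrec H r φ θb Sb β 1 μ h s a' b) + ε + c*ε := by
      intro a
      have t1 : ∑ b, ν h s b * Qval H r P p ν h s a b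
          ≤ ∑ b, ν h s b * (Qrec H r φ θb Sb β 1 μ h s a b + c*ε) :=
        Finset.sum_le_sum fun b _ => mul_le_mul_of_nonneg_left (key a b) ((hν h s).1 b)
      have t2 : ∑ b, ν h s b * (Qrec H r φ θb Sb β 1 μ h s a b + c*ε)
          = (∑ b, ν h s b * Qrec H r φ θb Sb β 1 μ h s a b) + c*ε := by
        simp only [mul_add, Finset.sum_add_distrib, ← Finset.sum_mul, (hν h s).2, one_mul]
      have t3 := hCCEa s a
      linarith
    have rear : ∑ a, ∑ b, p h s a * ν h s b * Qval H r P p ν h s a b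
        = ∑ a, p h s a * ∑ b, ν h s b * Qval H r P p ν h s a b := by
      refine Finset.sum_congr rfl fun a _ => ?_
      rw [Finset.mul_sum]
      exact Finset.sum_congr rfl fun b _ => by ring
    rw [rear]
    have t4 : ∑ a, p h s a * ∑ b, ν h s b * Qval H r P p ν h s a b
        ≤ ∑ a, p h s a * ((∑ a', ∑ b, μ h s a' b * Qrec H r φ θb Sb β 1 μ h s a' b) + ε + c*ε) :=
      Finset.sum_le_sum fun a _ => mul_le_mul_of_nonneg_left (inner a) ((hp h s).1 a)
    have t5 : ∑ a, p h s a * ((∑ a', ∑ b, μ h s a' b * Qrec H r φ θb Sb β 1 μ h s a' b) + ε + c*ε)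
        = (∑ a', ∑ b, μ h s a' b * Qrec H r φ θb Sb β 1 μ h s a' b) + ε + c*ε := by
      rw [← Finset.sum_mul, (hp h s).2, one_mul]
    rw [t5] at t4
    linarith

end vstep
section base
set_option linter.unusedSectionVars false
set_option linter.unusedVariables false
set_option maxHeartbeats 1000000

variable {S A B : Type*} [Fintype S] [Fintype A] [Fintype B] [Nonempty A] [Nonempty B]

lemma vminBR_last (H : ℕ) (r : ℕ → S → A → B → ℝ) (P : ℕ → S → A → B → S → ℝ)
    (p : ℕ → S → A → ℝ) (s : S) : VminBR H r P p (H+1) s = 0 := by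
  have hset : {x | ∃ q, IsPolicy q ∧ x = Vval H r P p q (H+1) s} = {(0:ℝ)} := by
    ext x
    simp only [Set.mem_setOf_eq, Set.mem_singleton_iff]
    constructor
    · rintro ⟨q, hq, rfl⟩
      simp [Vval, Nat.sub_self, Vaux]
    · rintro rfl
      exact ⟨_, isPolicy_unif, by simp [Vval, Nat.sub_self, Vaux]⟩
  rw [VminBR, hset, csInf_singleton]

lemma vmaxBR_last (H : ℕ) (r : ℕ → S → A → B → ℝ) (P : ℕ → S → A → B → S → ℝ)
    (q : ℕ → S → B → ℝ) (s : S) : VmaxBR H r P q (H+1) s = 0 := by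
  have hset : {x | ∃ p, IsPolicy p ∧ x = Vval H r P p q (H+1) s} = {(0:ℝ)} := by
    ext x
    simp only [Set.mem_setOf_eq, Set.mem_singleton_iff]
    constructor
    · rintro ⟨p, hp, rfl⟩
      simp [Vval, Nat.sub_self, Vaux]
    · rintro rfl
      exact ⟨_, isPolicy_unif, by simp [Vval, Nat.sub_self, Vaux]⟩
  rw [VmaxBR, hset, csSup_singleton]

end base

/-- Optimism and pessimism of the value estimates (Lemma A.6): under the confidence-set
conditions, the pessimistic estimates lower-bound (up to `(H−h+1)ε`, resp. `(H−h+2)ε`)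
and the optimistic estimates upper-bound the best-response values of the marginal
policies of the ε-CCE joint distributions `μ`. -/
theorem optimism_pessimism
    {S A B : Type*} [Fintype S] [Fintype A] [Fintype B]
    [Nonempty S] [Nonempty A] [Nonempty B] {d : ℕ}
    (H : ℕ) (hH : 1 ≤ H)
    (r : ℕ → S → A → B → ℝ) (P : ℕ → S → A → B → S → ℝ)
    (hGame : IsGame r P)
    (φ : S → A → B → S → Fin d → ℝ) (θs : ℕ → Fin d → ℝ)
    (hmix : ∀ h s a b s', P h s a b s' = φ s a b s' ⬝ᵥ θs h)
    (ε β : ℝ) (hε : 0 ≤ ε) (hβ : 0 < β)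
    (θb θl : ℕ → Fin d → ℝ)
    (Sb Sl : ℕ → Matrix (Fin d) (Fin d) ℝ)
    (hSb : ∀ h, (Sb h).PosDef) (hSl : ∀ h, (Sl h).PosDef)
    (μ : ℕ → S → A → B → ℝ)
    (hμ : ∀ h s, (∀ a b, 0 ≤ μ h s a b) ∧ ∑ a, ∑ b, μ h s a b = 1)
    -- ε-CCE conditions for (Q̄_h(s,·,·), Q̲_h(s,·,·)) at every step and state:
    (hCCE : ∀ h, 1 ≤ h → h ≤ H → ∀ s : S,
      (∀ a' : A,
        (∑ b, (∑ a, μ h s a b) * Qrec H r φ θb Sb β 1 μ h s a' b) - ε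
          ≤ ∑ a, ∑ b, μ h s a b * Qrec H r φ θb Sb β 1 μ h s a b) ∧
      (∀ b' : B,
        ∑ a, ∑ b, μ h s a b * Qrec H r φ θl Sl β (-1) μ h s a b
          ≤ (∑ a, (∑ b, μ h s a b) * Qrec H r φ θl Sl β (-1) μ h s a b') + ε))
    -- confidence-set conditions:
    (hconf : ∀ h, 1 ≤ h → h ≤ H →
      wnorm (Sb h) (θb h - θs h) ≤ β ∧ wnorm (Sl h) (θl h - θs h) ≤ β) :
    ∀ h, 1 ≤ h → h ≤ H → ∀ (s : S) (a : A) (b : B),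
      (Qrec H r φ θl Sl β (-1) μ h s a b - ((H : ℝ) - h + 1) * ε
          ≤ QminBR H r P (fun h s a => ∑ b, μ h s a b) h s a b ∧
        QminBR H r P (fun h s a => ∑ b, μ h s a b) h s a b
          ≤ QmaxBR H r P (fun h s b => ∑ a, μ h s a b) h s a b ∧
        QmaxBR H r P (fun h s b => ∑ a, μ h s a b) h s a b
          ≤ Qrec H r φ θb Sb β 1 μ h s a b + ((H : ℝ) - h + 1) * ε) ∧
      (VrecAt H r φ θl Sl β (-1) μ h s - ((H : ℝ) - h + 2) * ε
          ≤ VminBR H r P (fun h s a => ∑ b, μ h s a b) h s ∧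
        VminBR H r P (fun h s a => ∑ b, μ h s a b) h s
          ≤ VmaxBR H r P (fun h s b => ∑ a, μ h s a b) h s ∧
        VmaxBR H r P (fun h s b => ∑ a, μ h s a b) h s
          ≤ VrecAt H r φ θb Sb β 1 μ h s + ((H : ℝ) - h + 2) * ε) := by
  
  intro h h1 hH s a b
  have hπ : IsPolicy (fun h s a => ∑ b, μ h s a b) := by
    intro h' s'
    refine ⟨fun a' => Finset.sum_nonneg fun b' _ => (hμ h' s').1 a' b', (hμ h' s').2⟩
  have hν : IsPolicy (fun h s b => ∑ a, μ h s a b) := by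
    intro h' s'
    refine ⟨fun b' => Finset.sum_nonneg fun a' _ => (hμ h' s').1 a' b', ?_⟩
    rw [Finset.sum_comm]
    exact (hμ h' s').2
  have key : ∀ t h', h' + t = H + 1 → 1 ≤ h' → ∀ s' : S,
      Vrec H r φ θl Sl β (-1) μ t s' - ((t:ℝ)+1) * ε
          ≤ VminBR H r P (fun h s a => ∑ b, μ h s a b) h' s' ∧
      VminBR H r P (fun h s a => ∑ b, μ h s a b) h' s'
          ≤ VmaxBR H r P (fun h s b => ∑ a, μ h s a b) h' s' ∧
      VmaxBR H r P (fun h s b => ∑ a, μ h s a b) h' s'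
          ≤ Vrec H r φ θb Sb β 1 μ t s' + ((t:ℝ)+1) * ε := by
    intro t
    induction t with
    | zero =>
      intro h' he h1' s'
      have : h' = H + 1 := by omega
      subst this
      rw [vminBR_last, vmaxBR_last]
      simp only [Vrec, Nat.cast_zero]
      refine ⟨by nlinarith, le_rfl, by nlinarith⟩
    | succ t ih =>
      intro h' he h1' s'
      have hH' : h' ≤ H := by omega
      have et : H - h' = t := by omega
      have ih' := ih (h'+1) (by omega) (by omega)
      have hVl : ∀ s'', Vrec H r φ θl Sl β (-1) μ (H - h') s'' - ((t:ℝ)+1)*ε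
          ≤ VminBR H r P (fun h s a => ∑ b, μ h s a b) (h'+1) s'' := by
        intro s''; rw [et]; exact (ih' s'').1
      have hVb : ∀ s'', VmaxBR H r P (fun h s b => ∑ a, μ h s a b) (h'+1) s''
          ≤ Vrec H r φ θb Sb β 1 μ (H - h') s'' + ((t:ℝ)+1)*ε := by
        intro s''; rw [et]; exact (ih' s'').2.2
      have hQ := Qstep H r P hGame φ θs hmix ε β hε hβ θb θl Sb Sl hSb hSl μ
        (fun h s a => ∑ b, μ h s a b) (fun h s b => ∑ a, μ h s a b) hπ hν
        h' h1' hH' (hconf h' h1' hH').1 (hconf h' h1' hH').2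
        ((t:ℝ)+1) (by positivity) hVl hVb
      have hCCEa : ∀ (s'' : S) (a' : A),
          ∑ b', (fun h s b => ∑ a, μ h s a b) h' s'' b' * Qrec H r φ θb Sb β 1 μ h' s'' a' b'
          ≤ (∑ a', ∑ b', μ h' s'' a' b' * Qrec H r φ θb Sb β 1 μ h' s'' a' b') + ε := by
        intro s'' a'
        have h0 := (hCCE h' h1' hH' s'').1 a'
        simp only []
        linarith
      have hCCEb : ∀ (s'' : S) (b' : B),
          (∑ a', ∑ b'', μ h' s'' a' b'' * Qrec H r φ θl Sl β (-1) μ h' s'' a' b'') - ε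
          ≤ ∑ a', (fun h s a => ∑ b, μ h s a b) h' s'' a'
              * Qrec H r φ θl Sl β (-1) μ h' s'' a' b' := by
        intro s'' b'
        have h0 := (hCCE h' h1' hH' s'').2 b'
        simp only []
        linarith
      have hV := Vstep H r P hGame φ ε β hε θb θl Sb Sl μ
        (fun h s a => ∑ b, μ h s a b) (fun h s b => ∑ a, μ h s a b) hπ hν
        h' h1' hH' ((t:ℝ)+1) (by positivity) hQ hCCEa hCCEb s'
      have hvl := vrec_eq H r φ θl Sl β (-1) μ h' h1' hH' s'
      have hvb := vrec_eq H r φ θb Sb β 1 μ h' h1' hH' s'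
      rw [et] at hvl hvb
      rw [hvl, hvb]
      refine ⟨?_, hV.2.1, ?_⟩ <;> push_cast <;> [linarith [hV.1]; linarith [hV.2.2]]
  refine ⟨?_, ?_⟩
  · -- Q part
    have hk := key (H - h) (h+1) (by omega) (by omega)
    have hQ := Qstep H r P hGame φ θs hmix ε β hε hβ θb θl Sb Sl hSb hSl μ
      (fun h s a => ∑ b, μ h s a b) (fun h s b => ∑ a, μ h s a b) hπ hν
      h h1 hH (hconf h h1 hH).1 (hconf h h1 hH).2
      (((H - h : ℕ):ℝ)+1) (by positivity)
      (fun s'' => (hk s'').1) (fun s'' => (hk s'').2.2) s a b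
    obtain ⟨q1, q2, q3⟩ := hQ
    have e : ((H - h : ℕ):ℝ) = (H:ℝ) - h := Nat.cast_sub hH
    rw [e] at q1 q3
    exact ⟨by linarith, q2, by linarith⟩
  · -- V part
    obtain ⟨v1, v2, v3⟩ := key (H + 1 - h) h (by omega) h1 s
    have e : ((H + 1 - h : ℕ):ℝ) = (H:ℝ) + 1 - h := by
      rw [Nat.cast_sub (by omega : h ≤ H + 1)]; push_cast; ring
    rw [e] at v1 v3
    have ed : VrecAt H r φ θl Sl β (-1) μ h s = Vrec H r φ θl Sl β (-1) μ (H + 1 - h) s := rfl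
    have eb : VrecAt H r φ θb Sb β 1 μ h s = Vrec H r φ θb Sb β 1 μ (H + 1 - h) s := rfl
    rw [ed, eb]
    exact ⟨by linarith, v2, by linarith⟩
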